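/- Fix a control u ∈ L¹([s,T];ℝᵐ) and two Borel probability measures π, π' on 𝒜. Then the averaged costs satisfy |J_{s,π}[u] − J_{s,π'}[u]| ≤ (T·L_ℓ^u + L_h^u) · C_x^u · T · e^{C_𝒜 T} · W₁(π, π'), where C_x^u := (|x₀| + ‖B‖₂‖u‖_{L¹}) e^{C_𝒜 T}, L_ℓ^u := ‖Q‖₂ C_x^u, L_h^u := ‖Q_f‖₂ C_x^u, and W₁ is the Wasserstein-1 distance on 𝒜 induced by the matrix 2-norm. -/

import Mathlib

open MeasureTheory Set Matrix Filter Topology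

noncomputable instance matMS {k l : ℕ} : MeasurableSpace (Matrix (Fin k) (Fin l) ℝ) := borel _
instance matBS {k l : ℕ} : BorelSpace (Matrix (Fin k) (Fin l) ℝ) := ⟨rfl⟩

/-- The matrix 2-norm (operator norm w.r.t. Euclidean norms). -/
noncomputable def opN {k l : ℕ} (M : Matrix (Fin k) (Fin l) ℝ) : ℝ :=
  ‖LinearMap.toContinuousLinearMap (Matrix.toEuclideanLin M)‖

/-- Application of a matrix to a Euclidean vector. -/
noncomputable def app {k l : ℕ} (M : Matrix (Fin k) (Fin l) ℝ)
    (v : EuclideanSpace ℝ (Fin l)) : EuclideanSpace ℝ (Fin k) :=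
  Matrix.toEuclideanLin M v

/-- `x` is the solution on `[s,T]` of `ẋ = A x + B u`, `x(s) = x₀` (in integral form). -/
noncomputable def IsTraj {n m : ℕ} (B : Matrix (Fin n) (Fin m) ℝ) (s T : ℝ)
    (x₀ : EuclideanSpace ℝ (Fin n)) (A : Matrix (Fin n) (Fin n) ℝ)
    (u : ℝ → EuclideanSpace ℝ (Fin m)) (x : ℝ → EuclideanSpace ℝ (Fin n)) : Prop :=
  ContinuousOn x (Set.Icc s T) ∧
  ∀ t ∈ Set.Icc s T, x t = x₀ + ∫ τ in s..t, (app A (x τ) + app B (u τ))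

/-- The LQ cost `½∫ₛᵀ (xᵀQx + uᵀRu) dt + ½ x(T)ᵀ Q_f x(T)` of a trajectory/control pair. -/
noncomputable def cost {n m : ℕ} (Q Qf : Matrix (Fin n) (Fin n) ℝ) (R : Matrix (Fin m) (Fin m) ℝ)
    (s T : ℝ) (x : ℝ → EuclideanSpace ℝ (Fin n)) (u : ℝ → EuclideanSpace ℝ (Fin m)) : ℝ :=
  (1/2) * (∫ t in s..T, ((inner ℝ (x t) (app Q (x t)) : ℝ) + (inner ℝ (u t) (app R (u t)) : ℝ)))
    + (1/2) * (inner ℝ (x T) (app Qf (x T)) : ℝ)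

/-- An admissible process for the averaged problem: an integrable (and square-integrable)
control together with the corresponding family of trajectories, one for each `A ∈ 𝒜`. -/
noncomputable def Adm {n m : ℕ} (B : Matrix (Fin n) (Fin m) ℝ)
    (𝒜 : Set (Matrix (Fin n) (Fin n) ℝ)) (s T : ℝ) (x₀ : EuclideanSpace ℝ (Fin n))
    (u : ℝ → EuclideanSpace ℝ (Fin m))
    (x : Matrix (Fin n) (Fin n) ℝ → ℝ → EuclideanSpace ℝ (Fin n)) : Prop :=
  MeasureTheory.IntegrableOn u (Set.Icc s T) ∧
  MeasureTheory.IntegrableOn (fun t => ‖u t‖ ^ 2) (Set.Icc s T) ∧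
  ∀ A ∈ 𝒜, IsTraj B s T x₀ A u (x A)

/-- The averaged cost `J_{s,π}[u] = ∫_𝒜 cost(x_A, u) dπ(A)`. -/
noncomputable def Jcost {n m : ℕ} (Q Qf : Matrix (Fin n) (Fin n) ℝ)
    (R : Matrix (Fin m) (Fin m) ℝ) (s T : ℝ) (π : Measure (Matrix (Fin n) (Fin n) ℝ))
    (u : ℝ → EuclideanSpace ℝ (Fin m))
    (x : Matrix (Fin n) (Fin n) ℝ → ℝ → EuclideanSpace ℝ (Fin n)) : ℝ :=
  ∫ A, cost Q Qf R s T (x A) u ∂π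

/-- The value function `V_π(s,x₀)` of the averaged problem. -/
noncomputable def Val {n m : ℕ} (Q Qf : Matrix (Fin n) (Fin n) ℝ)
    (R : Matrix (Fin m) (Fin m) ℝ) (B : Matrix (Fin n) (Fin m) ℝ)
    (𝒜 : Set (Matrix (Fin n) (Fin n) ℝ)) (T : ℝ) (π : Measure (Matrix (Fin n) (Fin n) ℝ))
    (s : ℝ) (x₀ : EuclideanSpace ℝ (Fin n)) : ℝ :=
  sInf {c | ∃ u x, Adm B 𝒜 s T x₀ u x ∧ c = Jcost Q Qf R s T π u x}

/-- Wasserstein-1 distance between measures on the matrix space, induced by the 2-norm. -/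
noncomputable def W1 {k : ℕ} (π π' : Measure (Matrix (Fin k) (Fin k) ℝ)) : ℝ :=
  sInf {r | ∃ γ : Measure (Matrix (Fin k) (Fin k) ℝ × Matrix (Fin k) (Fin k) ℝ),
    γ.map Prod.fst = π ∧ γ.map Prod.snd = π' ∧ r = ∫ p, opN (p.1 - p.2) ∂γ}

/-- Support of a measure. -/
def msupport {α : Type*} [TopologicalSpace α] [MeasurableSpace α]
    (π : Measure α) : Set α :=
  {A | ∀ U : Set α, IsOpen U → A ∈ U → 0 < π U}

/-! ### Auxiliary lemmas -/

attribute [local instance] Matrix.normedAddCommGroup Matrix.normedSpace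

lemma opN_nonneg {k l : ℕ} (M : Matrix (Fin k) (Fin l) ℝ) : 0 ≤ opN M := norm_nonneg _

lemma norm_app_le {k l : ℕ} (M : Matrix (Fin k) (Fin l) ℝ) (v : EuclideanSpace ℝ (Fin l)) :
    ‖app M v‖ ≤ opN M * ‖v‖ := by
  have := (LinearMap.toContinuousLinearMap (Matrix.toEuclideanLin M)).le_opNorm v
  simpa [app, opN] using this

lemma app_continuous {k l : ℕ} (M : Matrix (Fin k) (Fin l) ℝ) :
    Continuous (fun v => app M v) :=
  (LinearMap.toContinuousLinearMap (Matrix.toEuclideanLin M)).continuous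

noncomputable def matPsi (k l : ℕ) : Matrix (Fin k) (Fin l) ℝ →L[ℝ]
    (EuclideanSpace ℝ (Fin l) →L[ℝ] EuclideanSpace ℝ (Fin k)) :=
  LinearMap.toContinuousLinearMap
    ((LinearMap.toContinuousLinearMap :
        (EuclideanSpace ℝ (Fin l) →ₗ[ℝ] EuclideanSpace ℝ (Fin k)) ≃ₗ[ℝ] _).toLinearMap ∘ₗ
      (Matrix.toEuclideanLin : Matrix (Fin k) (Fin l) ℝ ≃ₗ[ℝ] _).toLinearMap)

lemma opN_eq_psi {k l : ℕ} (M : Matrix (Fin k) (Fin l) ℝ) : opN M = ‖matPsi k l M‖ := by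
  simp [opN, matPsi]

lemma opN_sub_le {k l : ℕ} (A B : Matrix (Fin k) (Fin l) ℝ) : opN (A - B) ≤ opN A + opN B := by
  rw [opN_eq_psi, opN_eq_psi, opN_eq_psi, map_sub]
  exact norm_sub_le _ _

lemma opN_lip {k l : ℕ} (A B : Matrix (Fin k) (Fin l) ℝ) :
    opN (A - B) ≤ (@norm _ ContinuousLinearMap.hasOpNorm (matPsi k l)) * ‖A - B‖ := by
  rw [opN_eq_psi]; exact (matPsi k l).le_opNorm _

lemma opN_continuous {k l : ℕ} : Continuous (opN : Matrix (Fin k) (Fin l) ℝ → ℝ) := by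
  have : (opN : Matrix (Fin k) (Fin l) ℝ → ℝ) = fun M => ‖matPsi k l M‖ := by
    funext M; exact opN_eq_psi M
  rw [this]
  exact ((matPsi k l).continuous).norm

lemma gron {s T C a : ℝ} (hC : 0 ≤ C) (ha : 0 ≤ a) {y : ℝ → ℝ}
    (hy : Continuous y) (hy0 : ∀ t, 0 ≤ y t)
    (hb : ∀ t ∈ Set.Icc s T, y t ≤ a + C * ∫ τ in s..t, y τ) :
    ∀ t ∈ Set.Icc s T, y t ≤ a * Real.exp (C * (T - s)) := by
  set ψ : ℝ → ℝ := fun t => ∫ τ in s..t, y τ with hψdef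
  have hψ' : ∀ t, HasDerivAt ψ (y t) t := fun t =>
    (hy.integral_hasStrictDerivAt s t).hasDerivAt
  have hψc : Continuous ψ := by
    apply continuous_iff_continuousAt.mpr
    exact fun t => (hψ' t).continuousAt
  have hψ0 : ∀ t ∈ Set.Icc s T, 0 ≤ ψ t := by
    intro t ht
    exact intervalIntegral.integral_nonneg ht.1 (fun τ _ => hy0 τ)
  have hψs : ψ s = 0 := intervalIntegral.integral_same
  have key : ∀ t ∈ Set.Icc s T, ‖ψ t‖ ≤ gronwallBound 0 C a (t - s) := by
    apply norm_le_gronwallBound_of_norm_deriv_right_le hψc.continuousOn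
      (fun t _ => (hψ' t).hasDerivWithinAt)
    · simp [hψs]
    · intro t ht
      have h1 := hb t (Set.mem_Ico.mp ht |> fun h => ⟨h.1, h.2.le⟩)
      rw [Real.norm_eq_abs, Real.norm_eq_abs, abs_of_nonneg (hy0 t),
        abs_of_nonneg (hψ0 t ⟨ht.1, ht.2.le⟩)]
      linarith
  intro t ht
  have h1 := hb t ht
  have h2 := key t ht
  rw [Real.norm_eq_abs, abs_of_nonneg (hψ0 t ht)] at h2
  have hts : t - s ≤ T - s := by linarith [ht.2]
  have hts0 : 0 ≤ t - s := by linarith [ht.1]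
  rcases eq_or_lt_of_le hC with hC0 | hCpos
  · subst hC0
    simp only [gronwallBound_K0, zero_add] at h2
    have : Real.exp (0 * (T - s)) = 1 := by simp
    rw [this]
    linarith
  · rw [gronwallBound_of_K_ne_0 (ne_of_gt hCpos)] at h2
    have hψle : ψ t ≤ a / C * (Real.exp (C * (t - s)) - 1) := by
      simpa using h2
    have hexp : Real.exp (C * (t - s)) ≤ Real.exp (C * (T - s)) :=
      Real.exp_le_exp.mpr (by nlinarith)
    have : a + C * ψ t ≤ a * Real.exp (C * (t - s)) := by
      have := mul_le_mul_of_nonneg_left hψle (le_of_lt hCpos)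
      have hne : C ≠ 0 := ne_of_gt hCpos
      field_simp at this
      nlinarith
    calc y t ≤ a + C * ψ t := h1
      _ ≤ a * Real.exp (C * (t - s)) := this
      _ ≤ a * Real.exp (C * (T - s)) := by nlinarith [Real.exp_pos (C * (t - s))]

/-- clamp to `[s,T]` -/
noncomputable def clmp (s T t : ℝ) : ℝ := max s (min t T)

lemma clmp_mem {s T : ℝ} (h : s ≤ T) (t : ℝ) : clmp s T t ∈ Set.Icc s T := by
  constructor
  · exact le_max_left _ _
  · exact max_le h (min_le_right _ _)

lemma clmp_eq {s T t : ℝ} (h : t ∈ Set.Icc s T) : clmp s T t = t := by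
  simp [clmp, min_eq_left h.2, max_eq_right h.1]

lemma clmp_continuous (s T : ℝ) : Continuous (clmp s T) :=
  continuous_const.max (continuous_id.min continuous_const)

section traj
variable {n m : ℕ} {B : Matrix (Fin n) (Fin m) ℝ} {s T : ℝ}
  {x₀ : EuclideanSpace ℝ (Fin n)} {A A' : Matrix (Fin n) (Fin n) ℝ}
  {u : ℝ → EuclideanSpace ℝ (Fin m)} {x x' : ℝ → EuclideanSpace ℝ (Fin n)} {C𝒜 : ℝ}

lemma vf_intInt (hx : ContinuousOn x (Set.Icc s T)) (hu : IntegrableOn u (Set.Icc s T))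
    (hsT : s ≤ T) {t : ℝ} (ht : t ∈ Set.Icc s T) :
    IntervalIntegrable (fun τ => app A (x τ) + app B (u τ)) volume s t := by
  have h1 : IntegrableOn (fun τ => app A (x τ)) (Set.Icc s T) :=
    (((app_continuous A).comp_continuousOn hx)).integrableOn_Icc
  have h2 : IntegrableOn (fun τ => app B (u τ)) (Set.Icc s T) :=
    (LinearMap.toContinuousLinearMap (Matrix.toEuclideanLin B)).integrable_comp hu
  have h12 : IntegrableOn (fun τ => app A (x τ) + app B (u τ)) (Set.Icc s T) := h1.add h2
  have h3 : IntegrableOn (fun τ => app A (x τ) + app B (u τ)) (Set.Icc s t) :=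
    h12.mono_set (Set.Icc_subset_Icc le_rfl ht.2)
  rw [intervalIntegrable_iff_integrableOn_Icc_of_le ht.1]
  exact h3

lemma norm_u_intInt (hu : IntegrableOn u (Set.Icc s T)) {t : ℝ} (hst : s ≤ t) (htT : t ≤ T) :
    IntervalIntegrable (fun τ => ‖u τ‖) volume s t := by
  rw [intervalIntegrable_iff_integrableOn_Icc_of_le hst]
  have h1 : IntegrableOn (fun τ => ‖u τ‖) (Set.Icc s T) := hu.norm
  exact h1.mono_set (Set.Icc_subset_Icc le_rfl htT)

lemma traj_bound (hs0 : 0 ≤ s) (hsT : s ≤ T) (hC : 0 ≤ C𝒜) (hA : opN A ≤ C𝒜)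
    (hu : IntegrableOn u (Set.Icc s T)) (htr : IsTraj B s T x₀ A u x) :
    ∀ t ∈ Set.Icc s T,
      ‖x t‖ ≤ (‖x₀‖ + opN B * ∫ τ in s..T, ‖u τ‖) * Real.exp (C𝒜 * T) := by
  obtain ⟨hxc, hxe⟩ := htr
  set a : ℝ := ‖x₀‖ + opN B * ∫ τ in s..T, ‖u τ‖ with hadef
  have hInt : (0:ℝ) ≤ ∫ τ in s..T, ‖u τ‖ :=
    intervalIntegral.integral_nonneg hsT (fun τ _ => norm_nonneg _)
  have ha : 0 ≤ a := add_nonneg (norm_nonneg _) (mul_nonneg (opN_nonneg B) hInt)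
  set y : ℝ → ℝ := fun τ => ‖x (clmp s T τ)‖ with hydef
  have hyeq : ∀ t ∈ Set.Icc s T, y t = ‖x t‖ := fun t ht => by rw [hydef]; simp [clmp_eq ht]
  have hy : Continuous y :=
    (hxc.comp_continuous (clmp_continuous s T) (clmp_mem hsT)).norm
  have hb : ∀ t ∈ Set.Icc s T, y t ≤ a + C𝒜 * ∫ τ in s..t, y τ := by
    intro t ht
    have hIu : IntervalIntegrable (fun τ => ‖u τ‖) volume s t := norm_u_intInt hu ht.1 ht.2
    have hIy : IntervalIntegrable y volume s t := hy.intervalIntegrable s t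
    have hIrhs : IntervalIntegrable (fun τ => C𝒜 * y τ + opN B * ‖u τ‖) volume s t :=
      ((hIy.const_mul C𝒜).add (hIu.const_mul (opN B)))
    have step1 : ‖x t‖ ≤ ‖x₀‖ + ∫ τ in s..t, ‖app A (x τ) + app B (u τ)‖ := by
      rw [hxe t ht]
      refine (norm_add_le _ _).trans ?_
      gcongr
      exact intervalIntegral.norm_integral_le_integral_norm ht.1
    have step2 : (∫ τ in s..t, ‖app A (x τ) + app B (u τ)‖)
        ≤ ∫ τ in s..t, (C𝒜 * y τ + opN B * ‖u τ‖) := by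
      apply intervalIntegral.integral_mono_on ht.1
        ((vf_intInt hxc hu hsT ht).norm) hIrhs
      intro τ hτ
      have hτ' : τ ∈ Set.Icc s T := ⟨hτ.1, hτ.2.trans ht.2⟩
      calc ‖app A (x τ) + app B (u τ)‖ ≤ ‖app A (x τ)‖ + ‖app B (u τ)‖ := norm_add_le _ _
        _ ≤ C𝒜 * y τ + opN B * ‖u τ‖ := by
            rw [hyeq τ hτ']
            gcongr
            · exact (norm_app_le A _).trans (by nlinarith [norm_nonneg (x τ), norm_app_le A (x τ)])
            · exact norm_app_le B _
    have step3 : (∫ τ in s..t, (C𝒜 * y τ + opN B * ‖u τ‖))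
        = C𝒜 * (∫ τ in s..t, y τ) + opN B * ∫ τ in s..t, ‖u τ‖ := by
      rw [intervalIntegral.integral_add (hIy.const_mul C𝒜) (hIu.const_mul (opN B)),
        intervalIntegral.integral_const_mul, intervalIntegral.integral_const_mul]
    have step4 : (∫ τ in s..t, ‖u τ‖) ≤ ∫ τ in s..T, ‖u τ‖ := by
      apply intervalIntegral.integral_mono_interval le_rfl ht.1 ht.2
      · exact Filter.Eventually.of_forall (fun τ => norm_nonneg _)
      · exact norm_u_intInt hu hsT le_rfl
    rw [hyeq t ht]
    calc ‖x t‖ ≤ ‖x₀‖ + ∫ τ in s..t, ‖app A (x τ) + app B (u τ)‖ := step1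
      _ ≤ ‖x₀‖ + (C𝒜 * (∫ τ in s..t, y τ) + opN B * ∫ τ in s..t, ‖u τ‖) := by
          rw [← step3]; linarith [step2.trans_eq step3, step2]
      _ ≤ a + C𝒜 * ∫ τ in s..t, y τ := by
          rw [hadef]
          have := mul_le_mul_of_nonneg_left step4 (opN_nonneg B)
          linarith
  intro t ht
  have := gron hC ha hy (fun t => norm_nonneg _) hb t ht
  rw [hyeq t ht] at this
  refine this.trans ?_
  gcongr
  nlinarith

lemma app_sub_right {k l : ℕ} (M : Matrix (Fin k) (Fin l) ℝ) (v w : EuclideanSpace ℝ (Fin l)) :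
    app M (v - w) = app M v - app M w := by simp [app, map_sub]

lemma app_sub_left {k l : ℕ} (M N : Matrix (Fin k) (Fin l) ℝ) (v : EuclideanSpace ℝ (Fin l)) :
    app (M - N) v = app M v - app N v := by simp [app, map_sub]

lemma traj_diff (hs0 : 0 ≤ s) (hsT : s ≤ T) (hC : 0 ≤ C𝒜) (hA : opN A ≤ C𝒜)
    (hu : IntegrableOn u (Set.Icc s T)) (htr : IsTraj B s T x₀ A u x)
    (htr' : IsTraj B s T x₀ A' u x') {Cxu : ℝ} (hCxu0 : 0 ≤ Cxu)
    (hbx' : ∀ t ∈ Set.Icc s T, ‖x' t‖ ≤ Cxu) :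
    ∀ t ∈ Set.Icc s T,
      ‖x t - x' t‖ ≤ Cxu * T * Real.exp (C𝒜 * T) * opN (A - A') := by
  obtain ⟨hxc, hxe⟩ := htr
  obtain ⟨hxc', hxe'⟩ := htr'
  set d : ℝ := opN (A - A') * Cxu with hddef
  have hd0 : 0 ≤ d := mul_nonneg (opN_nonneg _) hCxu0
  set a : ℝ := d * (T - s) with hadef
  have ha : 0 ≤ a := mul_nonneg hd0 (by linarith)
  set y : ℝ → ℝ := fun τ => ‖x (clmp s T τ) - x' (clmp s T τ)‖ with hydef
  have hyeq : ∀ t ∈ Set.Icc s T, y t = ‖x t - x' t‖ := fun t ht => by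
    rw [hydef]; simp [clmp_eq ht]
  have hy : Continuous y := by
    have h1 := hxc.comp_continuous (clmp_continuous s T) (clmp_mem hsT)
    have h2 := hxc'.comp_continuous (clmp_continuous s T) (clmp_mem hsT)
    exact (h1.sub h2).norm
  have hb : ∀ t ∈ Set.Icc s T, y t ≤ a + C𝒜 * ∫ τ in s..t, y τ := by
    intro t ht
    have hI : IntervalIntegrable (fun τ => app A (x τ) + app B (u τ)) volume s t :=
      vf_intInt hxc hu hsT ht
    have hI' : IntervalIntegrable (fun τ => app A' (x' τ) + app B (u τ)) volume s t :=
      vf_intInt hxc' hu hsT ht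
    have hIy : IntervalIntegrable y volume s t := hy.intervalIntegrable s t
    have hIrhs : IntervalIntegrable (fun τ => C𝒜 * y τ + d) volume s t :=
      (hIy.const_mul C𝒜).add (intervalIntegrable_const)
    have hdiff : x t - x' t = ∫ τ in s..t,
        ((app A (x τ) + app B (u τ)) - (app A' (x' τ) + app B (u τ))) := by
      rw [hxe t ht, hxe' t ht, intervalIntegral.integral_sub hI hI']
      abel
    have step2 : (∫ τ in s..t, ‖(app A (x τ) + app B (u τ)) - (app A' (x' τ) + app B (u τ))‖)
        ≤ ∫ τ in s..t, (C𝒜 * y τ + d) := by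
      apply intervalIntegral.integral_mono_on ht.1 (hI.sub hI').norm hIrhs
      intro τ hτ
      have hτ' : τ ∈ Set.Icc s T := ⟨hτ.1, hτ.2.trans ht.2⟩
      have heq : (app A (x τ) + app B (u τ)) - (app A' (x' τ) + app B (u τ))
          = app A (x τ - x' τ) + app (A - A') (x' τ) := by
        rw [app_sub_right, app_sub_left]; abel
      rw [heq]
      calc ‖app A (x τ - x' τ) + app (A - A') (x' τ)‖
          ≤ ‖app A (x τ - x' τ)‖ + ‖app (A - A') (x' τ)‖ := norm_add_le _ _
        _ ≤ C𝒜 * y τ + d := by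
            rw [hyeq τ hτ', hddef]
            gcongr
            · exact (norm_app_le A _).trans
                (mul_le_mul_of_nonneg_right hA (norm_nonneg _))
            · exact (norm_app_le _ _).trans
                (mul_le_mul_of_nonneg_left (hbx' τ hτ') (opN_nonneg _))
    have step3 : (∫ τ in s..t, (C𝒜 * y τ + d))
        = C𝒜 * (∫ τ in s..t, y τ) + d * (t - s) := by
      rw [intervalIntegral.integral_add (hIy.const_mul C𝒜) intervalIntegrable_const,
        intervalIntegral.integral_const_mul, intervalIntegral.integral_const, smul_eq_mul]
      ring
    rw [hyeq t ht, hdiff]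
    calc ‖∫ τ in s..t, ((app A (x τ) + app B (u τ)) - (app A' (x' τ) + app B (u τ)))‖
        ≤ ∫ τ in s..t, ‖(app A (x τ) + app B (u τ)) - (app A' (x' τ) + app B (u τ))‖ :=
          intervalIntegral.norm_integral_le_integral_norm ht.1
      _ ≤ C𝒜 * (∫ τ in s..t, y τ) + d * (t - s) := step2.trans_eq step3
      _ ≤ a + C𝒜 * ∫ τ in s..t, y τ := by
          rw [hadef]
          have : d * (t - s) ≤ d * (T - s) := by nlinarith [ht.2]
          linarith
  intro t ht
  have hg := gron hC ha hy (fun t => norm_nonneg _) hb t ht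
  rw [hyeq t ht] at hg
  refine hg.trans ?_
  have h1 : Real.exp (C𝒜 * (T - s)) ≤ Real.exp (C𝒜 * T) := Real.exp_le_exp.mpr (by nlinarith)
  have h2 : (0:ℝ) < Real.exp (C𝒜 * (T - s)) := Real.exp_pos _
  have h3 : a ≤ opN (A - A') * Cxu * T := by rw [hadef, hddef]; nlinarith [opN_nonneg (A - A')]
  calc a * Real.exp (C𝒜 * (T - s)) ≤ (opN (A - A') * Cxu * T) * Real.exp (C𝒜 * T) := by
        apply mul_le_mul h3 h1 (le_of_lt h2)
        have := opN_nonneg (A - A')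
        nlinarith
    _ = Cxu * T * Real.exp (C𝒜 * T) * opN (A - A') := by ring

end traj

lemma quad_diff_bound {k : ℕ} (M : Matrix (Fin k) (Fin k) ℝ) (a b : EuclideanSpace ℝ (Fin k)) :
    |(inner ℝ a (app M a) : ℝ) - (inner ℝ b (app M b) : ℝ)|
      ≤ opN M * (‖a‖ + ‖b‖) * ‖a - b‖ := by
  have hid : (inner ℝ a (app M a) : ℝ) - (inner ℝ b (app M b) : ℝ)
      = (inner ℝ (a - b) (app M a) : ℝ) + (inner ℝ b (app M (a - b)) : ℝ) := by
    rw [inner_sub_left, app_sub_right, inner_sub_right]; ring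
  rw [hid]
  calc |(inner ℝ (a - b) (app M a) : ℝ) + (inner ℝ b (app M (a - b)) : ℝ)|
      ≤ |(inner ℝ (a - b) (app M a) : ℝ)| + |(inner ℝ b (app M (a - b)) : ℝ)| := abs_add_le _ _
    _ ≤ ‖a - b‖ * ‖app M a‖ + ‖b‖ * ‖app M (a - b)‖ := by
        gcongr <;> exact abs_real_inner_le_norm _ _
    _ ≤ ‖a - b‖ * (opN M * ‖a‖) + ‖b‖ * (opN M * ‖a - b‖) := by
        gcongr
        · exact norm_app_le _ _
        · exact norm_app_le _ _
    _ = opN M * (‖a‖ + ‖b‖) * ‖a - b‖ := by ring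

lemma quad_continuousOn {k : ℕ} (M : Matrix (Fin k) (Fin k) ℝ) {x : ℝ → EuclideanSpace ℝ (Fin k)}
    {S : Set ℝ} (hx : ContinuousOn x S) :
    ContinuousOn (fun t => (inner ℝ (x t) (app M (x t)) : ℝ)) S :=
  hx.inner ((app_continuous M).comp_continuousOn hx)

lemma cost_diff {n m : ℕ} {Q Qf : Matrix (Fin n) (Fin n) ℝ} {R : Matrix (Fin m) (Fin m) ℝ}
    {s T : ℝ} (hs0 : 0 ≤ s) (hsT : s ≤ T)
    {xa xb : ℝ → EuclideanSpace ℝ (Fin n)} {u : ℝ → EuclideanSpace ℝ (Fin m)}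
    (hca : ContinuousOn xa (Set.Icc s T)) (hcb : ContinuousOn xb (Set.Icc s T))
    {Cxu D : ℝ} (hCxu0 : 0 ≤ Cxu) (hD0 : 0 ≤ D)
    (hba : ∀ t ∈ Set.Icc s T, ‖xa t‖ ≤ Cxu) (hbb : ∀ t ∈ Set.Icc s T, ‖xb t‖ ≤ Cxu)
    (hD : ∀ t ∈ Set.Icc s T, ‖xa t - xb t‖ ≤ D) :
    |cost Q Qf R s T xa u - cost Q Qf R s T xb u|
      ≤ (T * (opN Q * Cxu) + opN Qf * Cxu) * D := by
  set qa : ℝ → ℝ := fun t => (inner ℝ (xa t) (app Q (xa t)) : ℝ) with hqadef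
  set qb : ℝ → ℝ := fun t => (inner ℝ (xb t) (app Q (xb t)) : ℝ) with hqbdef
  set r : ℝ → ℝ := fun t => (inner ℝ (u t) (app R (u t)) : ℝ) with hrdef
  have hTmem : T ∈ Set.Icc s T := ⟨hsT, le_rfl⟩
  have hqaI : IntervalIntegrable qa volume s T := by
    apply ContinuousOn.intervalIntegrable
    rw [Set.uIcc_of_le hsT]; exact quad_continuousOn Q hca
  have hqbI : IntervalIntegrable qb volume s T := by
    apply ContinuousOn.intervalIntegrable
    rw [Set.uIcc_of_le hsT]; exact quad_continuousOn Q hcb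
  have hterm : |(inner ℝ (xa T) (app Qf (xa T)) : ℝ) - (inner ℝ (xb T) (app Qf (xb T)) : ℝ)|
      ≤ opN Qf * (2 * Cxu) * D := by
    refine (quad_diff_bound Qf _ _).trans ?_
    have h1 : ‖xa T‖ + ‖xb T‖ ≤ 2 * Cxu := by
      have := hba T hTmem; have := hbb T hTmem; linarith
    have h2 : ‖xa T - xb T‖ ≤ D := hD T hTmem
    have h0 := opN_nonneg Qf
    exact mul_le_mul (mul_le_mul_of_nonneg_left h1 h0) h2 (norm_nonneg _)
      (mul_nonneg h0 (by linarith))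
  have hint : |(∫ t in s..T, (qa t + r t)) - (∫ t in s..T, (qb t + r t))|
      ≤ T * (2 * (opN Q * Cxu)) * D := by
    by_cases hr : IntervalIntegrable r volume s T
    · have e1 : (∫ t in s..T, (qa t + r t)) = (∫ t in s..T, qa t) + ∫ t in s..T, r t :=
        intervalIntegral.integral_add hqaI hr
      have e2 : (∫ t in s..T, (qb t + r t)) = (∫ t in s..T, qb t) + ∫ t in s..T, r t :=
        intervalIntegral.integral_add hqbI hr
      rw [e1, e2]
      have e3 : (∫ t in s..T, qa t) + (∫ t in s..T, r t) - ((∫ t in s..T, qb t) + ∫ t in s..T, r t)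
          = ∫ t in s..T, (qa t - qb t) := by
        rw [intervalIntegral.integral_sub hqaI hqbI]; ring
      rw [e3]
      have h4 : |∫ t in s..T, (qa t - qb t)| ≤ ∫ t in s..T, |qa t - qb t| := by
        have := intervalIntegral.norm_integral_le_integral_norm
          (f := fun t => qa t - qb t) (μ := volume) (a := s) (b := T) hsT
        simpa [Real.norm_eq_abs] using this
      refine h4.trans ?_
      have h5 : (∫ t in s..T, |qa t - qb t|) ≤ ∫ t in s..T, (2 * (opN Q * Cxu)) * D := by
        apply intervalIntegral.integral_mono_on hsT (hqaI.sub hqbI).abs intervalIntegrable_const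
        intro t ht
        refine (quad_diff_bound Q _ _).trans ?_
        have h1 : ‖xa t‖ + ‖xb t‖ ≤ 2 * Cxu := by
          have := hba t ht; have := hbb t ht; linarith
        have h2 : ‖xa t - xb t‖ ≤ D := hD t ht
        have h0 := opN_nonneg Q
        calc opN Q * (‖xa t‖ + ‖xb t‖) * ‖xa t - xb t‖
            ≤ opN Q * (2 * Cxu) * D := mul_le_mul (mul_le_mul_of_nonneg_left h1 h0) h2
              (norm_nonneg _) (mul_nonneg h0 (by linarith))
          _ = 2 * (opN Q * Cxu) * D := by ring
      refine h5.trans ?_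
      rw [intervalIntegral.integral_const, smul_eq_mul]
      have hQC : 0 ≤ opN Q * Cxu := mul_nonneg (opN_nonneg Q) hCxu0
      have hK : 0 ≤ 2 * (opN Q * Cxu) * D := by positivity
      nlinarith [mul_nonneg hs0 hK]
    · have h1 : ¬ IntervalIntegrable (fun t => qa t + r t) volume s T := by
        intro h; exact hr (by simpa using h.sub hqaI)
      have h2 : ¬ IntervalIntegrable (fun t => qb t + r t) volume s T := by
        intro h; exact hr (by simpa using h.sub hqbI)
      rw [intervalIntegral.integral_undef h1, intervalIntegral.integral_undef h2]
      simp only [sub_zero, abs_zero]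
      have hQC : 0 ≤ opN Q * Cxu := mul_nonneg (opN_nonneg Q) hCxu0
      have hT0 : 0 ≤ T := hs0.trans hsT
      positivity
  have ca : cost Q Qf R s T xa u = (1/2) * (∫ t in s..T, (qa t + r t))
      + (1/2) * (inner ℝ (xa T) (app Qf (xa T)) : ℝ) := rfl
  have cb : cost Q Qf R s T xb u = (1/2) * (∫ t in s..T, (qb t + r t))
      + (1/2) * (inner ℝ (xb T) (app Qf (xb T)) : ℝ) := rfl
  have hexp : cost Q Qf R s T xa u - cost Q Qf R s T xb u
      = (1/2) * ((∫ t in s..T, (qa t + r t)) - (∫ t in s..T, (qb t + r t)))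
        + (1/2) * ((inner ℝ (xa T) (app Qf (xa T)) : ℝ) - (inner ℝ (xb T) (app Qf (xb T)) : ℝ)) := by
    rw [ca, cb]; ring
  rw [hexp]
  calc |(1/2) * ((∫ t in s..T, (qa t + r t)) - (∫ t in s..T, (qb t + r t)))
        + (1/2) * ((inner ℝ (xa T) (app Qf (xa T)) : ℝ) - (inner ℝ (xb T) (app Qf (xb T)) : ℝ))|
      ≤ (1/2) * |(∫ t in s..T, (qa t + r t)) - (∫ t in s..T, (qb t + r t))|
        + (1/2) * |(inner ℝ (xa T) (app Qf (xa T)) : ℝ) - (inner ℝ (xb T) (app Qf (xb T)) : ℝ)| := by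
        refine (abs_add_le _ _).trans ?_
        have h12 : |(1/2 : ℝ)| = 1/2 := by rw [abs_of_nonneg]; norm_num
        rw [abs_mul, abs_mul, h12]
    _ ≤ (1/2) * (T * (2 * (opN Q * Cxu)) * D) + (1/2) * (opN Qf * (2 * Cxu) * D) := by gcongr
    _ = (T * (opN Q * Cxu) + opN Qf * Cxu) * D := by ring

theorem stmt_9 {n m : ℕ} (T : ℝ) (hT : 0 < T) (s : ℝ) (hs : s ∈ Set.Icc 0 T)
    (x₀ : EuclideanSpace ℝ (Fin n)) (B : Matrix (Fin n) (Fin m) ℝ)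
    (𝒜 : Set (Matrix (Fin n) (Fin n) ℝ)) (h𝒜 : IsCompact 𝒜)
    (C𝒜 : ℝ) (hC𝒜 : ∀ A ∈ 𝒜, opN A ≤ C𝒜)
    (Q Qf : Matrix (Fin n) (Fin n) ℝ) (R : Matrix (Fin m) (Fin m) ℝ)
    (hQ : Q.PosSemidef) (hQf : Qf.PosSemidef) (hR : R.PosDef)
    (u : ℝ → EuclideanSpace ℝ (Fin m)) (hu : IntegrableOn u (Set.Icc s T))
    (x : Matrix (Fin n) (Fin n) ℝ → ℝ → EuclideanSpace ℝ (Fin n))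
    (hx : ∀ A ∈ 𝒜, IsTraj B s T x₀ A u (x A))
    (π π' : Measure (Matrix (Fin n) (Fin n) ℝ))
    [IsProbabilityMeasure π] [IsProbabilityMeasure π']
    (hπ : π 𝒜ᶜ = 0) (hπ' : π' 𝒜ᶜ = 0)
    (Cxu Lell Lh : ℝ)
    (hCxu : Cxu = (‖x₀‖ + opN B * ∫ τ in s..T, ‖u τ‖) * Real.exp (C𝒜 * T))
    (hLell : Lell = opN Q * Cxu) (hLh : Lh = opN Qf * Cxu) :
    |Jcost Q Qf R s T π u x - Jcost Q Qf R s T π' u x| ≤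
      (T * Lell + Lh) * Cxu * T * Real.exp (C𝒜 * T) * W1 π π' := by
  obtain ⟨hs0, hsT⟩ := hs
  have hT0 : (0:ℝ) ≤ T := le_of_lt hT
  -- 𝒜 is nonempty
  have h𝒜ne : 𝒜.Nonempty := by
    rcases Set.eq_empty_or_nonempty 𝒜 with h | h
    · exfalso
      rw [h, Set.compl_empty] at hπ
      have := measure_univ (μ := π)
      rw [hπ] at this
      exact zero_ne_one this
    · exact h
  obtain ⟨A₀, hA₀⟩ := h𝒜ne
  have hC0 : 0 ≤ C𝒜 := (opN_nonneg A₀).trans (hC𝒜 A₀ hA₀)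
  have hIu : (0:ℝ) ≤ ∫ τ in s..T, ‖u τ‖ :=
    intervalIntegral.integral_nonneg hsT (fun τ _ => norm_nonneg _)
  have hCxu0 : 0 ≤ Cxu := by
    rw [hCxu]
    have : (0:ℝ) ≤ ‖x₀‖ + opN B * ∫ τ in s..T, ‖u τ‖ :=
      add_nonneg (norm_nonneg _) (mul_nonneg (opN_nonneg B) hIu)
    positivity
  set L0 : ℝ := (T * Lell + Lh) * (Cxu * T * Real.exp (C𝒜 * T)) with hL0
  have hLell0 : 0 ≤ Lell := by rw [hLell]; exact mul_nonneg (opN_nonneg Q) hCxu0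
  have hLh0 : 0 ≤ Lh := by rw [hLh]; exact mul_nonneg (opN_nonneg Qf) hCxu0
  have hL00 : 0 ≤ L0 := by
    rw [hL0]
    have h1 : 0 ≤ T * Lell + Lh := by nlinarith
    have h2 : 0 ≤ Cxu * T * Real.exp (C𝒜 * T) := by positivity
    exact mul_nonneg h1 h2
  set f : Matrix (Fin n) (Fin n) ℝ → ℝ := fun A => cost Q Qf R s T (x A) u with hfdef
  -- uniform bound on trajectories
  have hbx : ∀ A ∈ 𝒜, ∀ t ∈ Set.Icc s T, ‖x A t‖ ≤ Cxu := by
    intro A hA t ht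
    rw [hCxu]
    exact traj_bound hs0 hsT hC0 (hC𝒜 A hA) hu (hx A hA) t ht
  -- Lipschitz estimate on 𝒜 with respect to opN
  have key : ∀ A ∈ 𝒜, ∀ A' ∈ 𝒜, |f A - f A'| ≤ L0 * opN (A - A') := by
    intro A hA A' hA'
    have hDb := traj_diff hs0 hsT hC0 (hC𝒜 A hA) hu (hx A hA) (hx A' hA') hCxu0 (hbx A' hA')
    have hD0' : 0 ≤ Cxu * T * Real.exp (C𝒜 * T) * opN (A - A') := by
      have := opN_nonneg (A - A')
      positivity
    have hcd := cost_diff (Q := Q) (Qf := Qf) (R := R) (u := u) hs0 hsT (hx A hA).1 (hx A' hA').1 hCxu0 hD0'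
      (hbx A hA) (hbx A' hA') hDb
    refine hcd.trans ?_
    rw [hL0, hLell, hLh]
    apply le_of_eq
    ring
  -- uniform bound of |f| on 𝒜
  set Mb : ℝ := |f A₀| + L0 * (2 * C𝒜) with hMbdef
  have hfb : ∀ A ∈ 𝒜, |f A| ≤ Mb := by
    intro A hA
    have h1 := key A hA A₀ hA₀
    have h2 : opN (A - A₀) ≤ 2 * C𝒜 := by
      refine (opN_sub_le A A₀).trans ?_
      have := hC𝒜 A hA; have := hC𝒜 A₀ hA₀; linarith
    have h3 : |f A| - |f A₀| ≤ |f A - f A₀| := abs_sub_abs_le_abs_sub _ _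
    have h4 : L0 * opN (A - A₀) ≤ L0 * (2 * C𝒜) := mul_le_mul_of_nonneg_left h2 hL00
    rw [hMbdef]; linarith
  -- f is Lipschitz on 𝒜 w.r.t. the sup-norm metric, hence continuous
  have hlip : LipschitzOnWith (Real.toNNReal (L0 * (@norm _ ContinuousLinearMap.hasOpNorm (matPsi n n)))) f 𝒜 := by
    apply LipschitzOnWith.of_dist_le'
    intro A hA A' hA'
    rw [Real.dist_eq, dist_eq_norm]
    calc |f A - f A'| ≤ L0 * opN (A - A') := key A hA A' hA'
      _ ≤ L0 * ((@norm _ ContinuousLinearMap.hasOpNorm (matPsi n n)) * ‖A - A'‖) :=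
          mul_le_mul_of_nonneg_left (opN_lip A A') hL00
      _ = L0 * (@norm _ ContinuousLinearMap.hasOpNorm (matPsi n n)) * ‖A - A'‖ := by ring
  haveI : SecondCountableTopology (Matrix (Fin n) (Fin n) ℝ) := secondCountable_of_proper
  haveI : OpensMeasurableSpace (Matrix (Fin n) (Fin n) ℝ) := matBS.opensMeasurable
  have h𝒜meas : MeasurableSet 𝒜 := h𝒜.isClosed.measurableSet
  have haemem : ∀ᵐ A ∂π, A ∈ 𝒜 := by
    rw [ae_iff]
    exact hπ
  have haemem' : ∀ᵐ A ∂π', A ∈ 𝒜 := by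
    rw [ae_iff]
    exact hπ'
  have hfm : AEStronglyMeasurable f π := by
    have h1 : AEStronglyMeasurable f (π.restrict 𝒜) :=
      (show ContinuousOn f 𝒜 from hlip.continuousOn).aestronglyMeasurable h𝒜meas
    rwa [Measure.restrict_eq_self_of_ae_mem haemem] at h1
  have hfm' : AEStronglyMeasurable f π' := by
    have h1 : AEStronglyMeasurable f (π'.restrict 𝒜) :=
      (show ContinuousOn f 𝒜 from hlip.continuousOn).aestronglyMeasurable h𝒜meas
    rwa [Measure.restrict_eq_self_of_ae_mem haemem'] at h1
  -- the set of coupling costs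
  have hJ : Jcost Q Qf R s T π u x = ∫ A, f A ∂π := rfl
  have hJ' : Jcost Q Qf R s T π' u x = ∫ A, f A ∂π' := rfl
  -- main estimate for each coupling
  have key2 : ∀ γ : Measure (Matrix (Fin n) (Fin n) ℝ × Matrix (Fin n) (Fin n) ℝ),
      γ.map Prod.fst = π → γ.map Prod.snd = π' →
      |Jcost Q Qf R s T π u x - Jcost Q Qf R s T π' u x| ≤ L0 * ∫ p, opN (p.1 - p.2) ∂γ := by
    intro γ hγ1 hγ2
    have huniv : γ Set.univ = 1 := by
      have h := congrArg (fun μ : Measure (Matrix (Fin n) (Fin n) ℝ) => μ Set.univ) hγ1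
      simp only [Measure.map_apply measurable_fst MeasurableSet.univ, Set.preimage_univ] at h
      rw [h]
      exact measure_univ
    haveI : IsProbabilityMeasure γ := ⟨huniv⟩
    have hae1 : ∀ᵐ p ∂γ, p.1 ∈ 𝒜 := by
      rw [ae_iff]
      have heq : {p : Matrix (Fin n) (Fin n) ℝ × Matrix (Fin n) (Fin n) ℝ | ¬ p.1 ∈ 𝒜}
          = Prod.fst ⁻¹' 𝒜ᶜ := rfl
      rw [heq, ← Measure.map_apply measurable_fst h𝒜meas.compl, hγ1]
      exact hπ
    have hae2 : ∀ᵐ p ∂γ, p.2 ∈ 𝒜 := by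
      rw [ae_iff]
      have heq : {p : Matrix (Fin n) (Fin n) ℝ × Matrix (Fin n) (Fin n) ℝ | ¬ p.2 ∈ 𝒜}
          = Prod.snd ⁻¹' 𝒜ᶜ := rfl
      rw [heq, ← Measure.map_apply measurable_snd h𝒜meas.compl, hγ2]
      exact hπ'
    have hfm1 : AEStronglyMeasurable f (γ.map Prod.fst) := hγ1 ▸ hfm
    have hfm2 : AEStronglyMeasurable f (γ.map Prod.snd) := hγ2 ▸ hfm'
    have e1 : ∫ A, f A ∂π = ∫ p, f p.1 ∂γ := by
      rw [← hγ1]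
      exact integral_map measurable_fst.aemeasurable hfm1
    have e2 : ∫ A, f A ∂π' = ∫ p, f p.2 ∂γ := by
      rw [← hγ2]
      exact integral_map measurable_snd.aemeasurable hfm2
    have meas1 : AEStronglyMeasurable (fun p => f p.1) γ :=
      hfm1.comp_aemeasurable measurable_fst.aemeasurable
    have meas2 : AEStronglyMeasurable (fun p => f p.2) γ :=
      hfm2.comp_aemeasurable measurable_snd.aemeasurable
    have int1 : Integrable (fun p => f p.1) γ := by
      apply Integrable.mono' (integrable_const Mb) meas1
      filter_upwards [hae1] with p hp
      rw [Real.norm_eq_abs]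
      exact hfb _ hp
    have int2 : Integrable (fun p => f p.2) γ := by
      apply Integrable.mono' (integrable_const Mb) meas2
      filter_upwards [hae2] with p hp
      rw [Real.norm_eq_abs]
      exact hfb _ hp
    have intOp : Integrable (fun p => opN (p.1 - p.2)) γ := by
      apply Integrable.mono' (integrable_const (2 * C𝒜))
      · exact (opN_continuous.comp (continuous_fst.sub continuous_snd)).aestronglyMeasurable
      · filter_upwards [hae1, hae2] with p hp1 hp2
        rw [Real.norm_eq_abs, abs_of_nonneg (opN_nonneg _)]
        refine (opN_sub_le _ _).trans ?_
        have := hC𝒜 _ hp1; have := hC𝒜 _ hp2; linarith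
    have hptwise : ∀ᵐ p ∂γ, |f p.1 - f p.2| ≤ L0 * opN (p.1 - p.2) := by
      filter_upwards [hae1, hae2] with p hp1 hp2
      exact key _ hp1 _ hp2
    rw [hJ, hJ', e1, e2, ← integral_sub int1 int2]
    calc |∫ p, (f p.1 - f p.2) ∂γ| ≤ ∫ p, |f p.1 - f p.2| ∂γ := by
          have := norm_integral_le_integral_norm (fun p => f p.1 - f p.2) (μ := γ)
          simpa [Real.norm_eq_abs] using this
      _ ≤ ∫ p, L0 * opN (p.1 - p.2) ∂γ :=
          integral_mono_ae (int1.sub int2).abs (intOp.const_mul L0) hptwise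
      _ = L0 * ∫ p, opN (p.1 - p.2) ∂γ := integral_const_mul _ _
  -- assemble: bound against the infimum
  have hgoal : |Jcost Q Qf R s T π u x - Jcost Q Qf R s T π' u x| ≤ L0 * W1 π π' := by
    set S : Set ℝ := {r | ∃ γ : Measure (Matrix (Fin n) (Fin n) ℝ × Matrix (Fin n) (Fin n) ℝ),
      γ.map Prod.fst = π ∧ γ.map Prod.snd = π' ∧ r = ∫ p, opN (p.1 - p.2) ∂γ} with hSdef
    have hW1 : W1 π π' = sInf S := rfl
    have hSne : S.Nonempty := by
      refine ⟨∫ p, opN (p.1 - p.2) ∂(π.prod π'), π.prod π', ?_, ?_, rfl⟩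
      · rw [Measure.map_fst_prod]; simp
      · rw [Measure.map_snd_prod]; simp
    have hkey2' : ∀ r ∈ S, |Jcost Q Qf R s T π u x - Jcost Q Qf R s T π' u x| ≤ L0 * r := by
      rintro r ⟨γ, hγ1, hγ2, rfl⟩
      exact key2 γ hγ1 hγ2
    rcases eq_or_lt_of_le hL00 with hz | hpos
    · obtain ⟨r₀, hr₀⟩ := hSne
      have h1 := hkey2' r₀ hr₀
      rw [← hz] at h1 ⊢
      simpa using h1
    · have hlow : |Jcost Q Qf R s T π u x - Jcost Q Qf R s T π' u x| / L0 ≤ sInf S := by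
        apply le_csInf hSne
        intro r hr
        rw [div_le_iff₀ hpos]
        calc |Jcost Q Qf R s T π u x - Jcost Q Qf R s T π' u x| ≤ L0 * r := hkey2' r hr
          _ = r * L0 := mul_comm _ _
      have h2 := mul_le_mul_of_nonneg_left hlow (le_of_lt hpos)
      rw [mul_div_cancel₀ _ (ne_of_gt hpos)] at h2
      rw [hW1]
      exact h2
  calc |Jcost Q Qf R s T π u x - Jcost Q Qf R s T π' u x| ≤ L0 * W1 π π' := hgoal
    _ = (T * Lell + Lh) * Cxu * T * Real.exp (C𝒜 * T) * W1 π π' := by rw [hL0]; ring
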